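/- Fix p ∈ (1,2) and set θ_p = 2/p − 1. There exists a constant C_p > 0 such that for all y = (y₁,y₂) ∈ ℝ²₊, the function φ_y(x) = y₂^{1−θ_p}/(|x−y|·|x−y*|) on ℝ²₊ satisfies ‖φ_y‖_{L^p(ℝ²₊)} ≤ C_p, i.e. the family (φ_y) is uniformly bounded in L^p(ℝ²₊) independently of y. -/

import Mathlib

open MeasureTheory

/-- The open upper half-plane `ℝ²₊ = {x : x₂ > 0}`. -/
def halfPlane : Set (ℝ × ℝ) := {p | 0 < p.2}

open Set Real
open scoped ENNReal


/-- 1D change of variables `x = b + a*t` for lintegrals. -/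
lemma lintegral_shift_scale (f : ℝ → ℝ≥0∞) (hf : Measurable f) (b a : ℝ) (ha : 0 < a) :
    ∫⁻ x, f x = ENNReal.ofReal a * ∫⁻ t, f (b + a * t) := by
  have hT : Measurable fun t : ℝ => b + a * t := by fun_prop
  have hmap : Measure.map (fun t : ℝ => b + a * t) volume
      = ENNReal.ofReal |a⁻¹| • volume := by
    have h1 : (fun t : ℝ => b + a * t) = (fun t : ℝ => b + t) ∘ (fun t : ℝ => a * t) := rfl
    rw [h1, ← Measure.map_map (by fun_prop) (by fun_prop), Real.map_volume_mul_left ha.ne',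
      Measure.map_smul]
    congr 1
    exact map_add_left_eq_self volume b
  have := lintegral_map (μ := volume) hf hT
  rw [hmap, lintegral_smul_measure, smul_eq_mul] at this
  rw [← this, ← mul_assoc, ← ENNReal.ofReal_mul ha.le, abs_of_pos (inv_pos.2 ha),
    mul_inv_cancel₀ ha.ne', ENNReal.ofReal_one, one_mul]

lemma B_fin {p : ℝ} (hp1 : 1 < p) :
    ∫⁻ t : ℝ, ENNReal.ofReal ((t ^ 2 + 1) ^ (-(p / 2))) < ⊤ := by
  have hpt : ∀ t : ℝ, (t ^ 2 + 1) ^ (-(p / 2)) ≤ 2 ^ (p / 2) * (1 + |t|) ^ (-p) := by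
    intro t
    have h0 : (0:ℝ) < t ^ 2 + 1 := by positivity
    have h1 : (0:ℝ) < 1 + |t| := by positivity
    have key : (1 + |t|) ^ 2 ≤ 2 * (t ^ 2 + 1) := by
      have := sq_nonneg (|t| - 1)
      have : 2 * |t| ≤ t ^ 2 + 1 := by nlinarith [sq_abs t]
      nlinarith [sq_abs t]
    have e1 : ((1 + |t|) ^ 2 : ℝ) ^ (p / 2) = (1 + |t|) ^ p := by
      rw [← Real.rpow_natCast (1 + |t|) 2, ← Real.rpow_mul h1.le]
      norm_num
      congr 1
      ring
    have h2 : (1 + |t|) ^ p ≤ 2 ^ (p / 2) * (t ^ 2 + 1) ^ (p / 2) := by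
      rw [← e1, ← Real.mul_rpow (by norm_num) h0.le]
      exact Real.rpow_le_rpow (sq_nonneg _) key (by positivity)
    rw [Real.rpow_neg h0.le, Real.rpow_neg h1.le, inv_eq_one_div, inv_eq_one_div, mul_one_div,
      div_le_div_iff₀ (by positivity) (by positivity)]
    nlinarith [h2, Real.rpow_nonneg (by norm_num : (0:ℝ) ≤ 2) (p/2),
      Real.rpow_nonneg h0.le (p/2)]
  calc ∫⁻ t : ℝ, ENNReal.ofReal ((t ^ 2 + 1) ^ (-(p / 2)))
      ≤ ∫⁻ t : ℝ, ENNReal.ofReal (2 ^ (p / 2)) * ENNReal.ofReal ((1 + |t|) ^ (-p)) := by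
        refine lintegral_mono fun t => ?_
        rw [← ENNReal.ofReal_mul (by positivity)]
        exact ENNReal.ofReal_le_ofReal (hpt t)
    _ = ENNReal.ofReal (2 ^ (p / 2)) * ∫⁻ t : ℝ, ENNReal.ofReal ((1 + |t|) ^ (-p)) :=
        lintegral_const_mul' _ _ ENNReal.ofReal_ne_top
    _ < ⊤ := by
        refine ENNReal.mul_lt_top ENNReal.ofReal_lt_top ?_
        have := finite_integral_one_add_norm (E := ℝ) (μ := volume) (r := p) (by simpa using hp1)
        simpa [Real.norm_eq_abs] using this

lemma inner_subst {p : ℝ} (y₁ a : ℝ) (ha : 0 < a) :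
    ∫⁻ x₁ : ℝ, ENNReal.ofReal (((x₁ - y₁) ^ 2 + a ^ 2) ^ (-(p / 2)))
      = ENNReal.ofReal (a ^ (1 - p)) *
        ∫⁻ t : ℝ, ENNReal.ofReal ((t ^ 2 + 1) ^ (-(p / 2))) := by
  have hf : Measurable fun x₁ : ℝ => ENNReal.ofReal (((x₁ - y₁) ^ 2 + a ^ 2) ^ (-(p / 2))) := by
    fun_prop
  rw [lintegral_shift_scale _ hf y₁ a ha]
  have hptw : ∀ t : ℝ, ((y₁ + a * t - y₁) ^ 2 + a ^ 2) ^ (-(p / 2))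
      = a ^ (-p) * (t ^ 2 + 1) ^ (-(p / 2)) := by
    intro t
    have e0 : (y₁ + a * t - y₁) ^ 2 + a ^ 2 = a ^ 2 * (t ^ 2 + 1) := by ring
    rw [e0, Real.mul_rpow (by positivity) (by positivity)]
    congr 1
    rw [← Real.rpow_natCast a 2, ← Real.rpow_mul ha.le]
    congr 1
    ring
  simp_rw [hptw]
  rw [show ∫⁻ t : ℝ, ENNReal.ofReal (a ^ (-p) * (t ^ 2 + 1) ^ (-(p / 2)))
      = ENNReal.ofReal (a ^ (-p)) * ∫⁻ t : ℝ, ENNReal.ofReal ((t ^ 2 + 1) ^ (-(p / 2))) by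
    simp_rw [ENNReal.ofReal_mul (Real.rpow_nonneg ha.le _)]
    exact lintegral_const_mul' _ _ ENNReal.ofReal_ne_top]
  rw [← mul_assoc, ← ENNReal.ofReal_mul ha.le]
  congr 2
  rw [show (1 : ℝ) - p = 1 + -p by ring, Real.rpow_add ha, Real.rpow_one]

lemma abs_rpow_intervalIntegrable {r : ℝ} (hr : -1 < r) :
    IntervalIntegrable (fun v : ℝ => |v| ^ r) volume (-1) 1 := by
  have h01 : ∀ c : ℝ, 0 ≤ c → IntervalIntegrable (fun v : ℝ => |v| ^ r) volume 0 c := by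
    intro c hc
    rw [intervalIntegrable_iff_integrableOn_Ioc_of_le hc]
    have h := intervalIntegral.intervalIntegrable_rpow' (a := 0) (b := c) hr
    rw [intervalIntegrable_iff_integrableOn_Ioc_of_le hc] at h
    exact h.congr_fun (fun v hv => by rw [abs_of_pos hv.1]) measurableSet_Ioc
  have h10 : IntervalIntegrable (fun v : ℝ => |v| ^ r) volume (-1) 0 := by
    have := (h01 1 zero_le_one)
    rw [IntervalIntegrable.iff_comp_neg] at this
    simpa using this.symm
  exact h10.trans (h01 1 zero_le_one)

lemma A_fin {p : ℝ} (hp1 : 1 < p) (hp2 : p < 2) :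
    ∫⁻ u in Set.Ioi (0:ℝ), ENNReal.ofReal (|u - 1| ^ (1 - p) * (u + 1) ^ (-p)) < ⊤ := by
  set F : ℝ → ℝ := fun u => |u - 1| ^ (1 - p) * (u + 1) ^ (-p) with hF
  have hFmeas : Measurable F := by fun_prop
  have hInt : IntegrableOn F (Set.Ioi (0:ℝ)) volume := by
    have hsub : Set.Ioi (0:ℝ) ⊆ Set.Ioc 0 2 ∪ Set.Ioi 2 := by
      intro u hu
      rcases le_or_gt u 2 with h | h
      · exact Or.inl ⟨hu, h⟩
      · exact Or.inr h
    refine IntegrableOn.mono_set (IntegrableOn.union ?_ ?_) hsub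
    · -- on Ioc 0 2
      have hG : IntegrableOn (fun u : ℝ => |u - 1| ^ (1 - p)) (Set.Ioc 0 2) volume := by
        have h1 : IntervalIntegrable (fun u : ℝ => |u + -1| ^ (1 - p)) volume
            (-1 - -1) (1 - -1) :=
          (abs_rpow_intervalIntegrable (by linarith)).comp_add_right (-1)
        norm_num at h1
        rw [intervalIntegrable_iff_integrableOn_Ioc_of_le (by norm_num)] at h1
        exact h1.congr_fun (fun u _ => by dsimp only; rw [show u + -1 = u - 1 from by ring]) measurableSet_Ioc
      refine Integrable.mono' hG hFmeas.aestronglyMeasurable.restrict ?_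
      refine (ae_restrict_iff' measurableSet_Ioc).2 (Filter.Eventually.of_forall fun u hu => ?_)
      simp only [hF, Real.norm_eq_abs]
      rw [abs_of_nonneg (mul_nonneg (Real.rpow_nonneg (abs_nonneg _) _)
        (Real.rpow_nonneg (by linarith [hu.1]) _))]
      have h2 : (u + 1) ^ (-p) ≤ 1 :=
        Real.rpow_le_one_of_one_le_of_nonpos (by linarith [hu.1]) (by linarith)
      calc |u - 1| ^ (1 - p) * (u + 1) ^ (-p) ≤ |u - 1| ^ (1 - p) * 1 := by
            exact mul_le_mul_of_nonneg_left h2 (by positivity)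
        _ = |u - 1| ^ (1 - p) := mul_one _
    · -- on Ioi 2
      have hG : IntegrableOn (fun u : ℝ => (u + -1) ^ (1 - 2 * p)) (Set.Ioi 2) volume := by
        have base : IntegrableOn (fun x : ℝ => x ^ (1 - 2 * p)) (Set.Ioi 1) volume :=
          integrableOn_Ioi_rpow_of_lt (by linarith) one_pos
        have hmp : MeasurePreserving (fun u : ℝ => u + -1) volume volume :=
          measurePreserving_add_right volume (-1)
        have hemb : MeasurableEmbedding (fun u : ℝ => u + -1) :=
          (MeasurableEquiv.addRight (-1)).measurableEmbedding
        have hpre : (fun u : ℝ => u + -1) ⁻¹' (Set.Ioi 1) = Set.Ioi 2 := by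
          ext u; simp [Set.mem_Ioi]; constructor <;> intro h <;> linarith
        have := (hmp.integrableOn_comp_preimage hemb).2 base
        rwa [hpre] at this
      refine Integrable.mono' hG hFmeas.aestronglyMeasurable.restrict ?_
      refine (ae_restrict_iff' measurableSet_Ioi).2 (Filter.Eventually.of_forall fun u hu => ?_)
      simp only [hF, Real.norm_eq_abs]
      have hu2 : (2:ℝ) < u := hu
      rw [abs_of_nonneg (mul_nonneg (Real.rpow_nonneg (abs_nonneg _) _)
        (Real.rpow_nonneg (by linarith) _))]
      have h3 : |u - 1| = u - 1 := abs_of_pos (by linarith)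
      have h4 : (u + 1) ^ (-p) ≤ (u - 1) ^ (-p) := by
        rw [Real.rpow_neg (by linarith), Real.rpow_neg (by linarith)]
        refine inv_anti₀ (Real.rpow_pos_of_pos (by linarith) _) ?_
        exact Real.rpow_le_rpow (by linarith) (by linarith) (by linarith)
      calc |u - 1| ^ (1 - p) * (u + 1) ^ (-p)
          ≤ (u - 1) ^ (1 - p) * (u - 1) ^ (-p) := by
            rw [h3]; exact mul_le_mul_of_nonneg_left h4 (Real.rpow_nonneg (by linarith) _)
        _ = (u - 1) ^ (1 - 2 * p) := by
            rw [← Real.rpow_add (by linarith)]; congr 1; ring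
        _ = (u + -1) ^ (1 - 2 * p) := by rw [show u + -1 = u - 1 from by ring]
  exact hInt.setLIntegral_lt_top

lemma outer_subst {p : ℝ} {y₂ : ℝ} (hy : 0 < y₂) :
    ∫⁻ s in Set.Ioi (0:ℝ), ENNReal.ofReal (|s - y₂| ^ (1 - p) * (s + y₂) ^ (-p))
      = ENNReal.ofReal (y₂ ^ (2 - 2 * p)) *
        ∫⁻ u in Set.Ioi (0:ℝ), ENNReal.ofReal (|u - 1| ^ (1 - p) * (u + 1) ^ (-p)) := by
  set h : ℝ → ℝ≥0∞ := fun s => ENNReal.ofReal (|s - y₂| ^ (1 - p) * (s + y₂) ^ (-p)) with hh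
  have hmeas : Measurable h := by fun_prop
  have hmeas' : Measurable ((Set.Ioi (0:ℝ)).indicator h) :=
    hmeas.indicator measurableSet_Ioi
  rw [← lintegral_indicator measurableSet_Ioi,
    lintegral_shift_scale _ hmeas' 0 y₂ hy]
  have step1 : ∀ u : ℝ, (Set.Ioi (0:ℝ)).indicator h (0 + y₂ * u)
      = (Set.Ioi (0:ℝ)).indicator (fun u => h (y₂ * u)) u := by
    intro u
    by_cases hu : 0 < u
    · rw [Set.indicator_of_mem (by simpa using mul_pos hy hu),
        Set.indicator_of_mem (by exact hu), zero_add]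
    · rw [Set.indicator_of_notMem, Set.indicator_of_notMem (by simpa using hu)]
      simp only [Set.mem_Ioi, zero_add]
      intro hcon
      exact absurd hcon (not_lt.2 (mul_nonpos_of_nonneg_of_nonpos hy.le (not_lt.1 hu)))
  simp_rw [step1]
  rw [lintegral_indicator measurableSet_Ioi]
  have step2 : ∫⁻ u in Set.Ioi (0:ℝ), h (y₂ * u)
      = ∫⁻ u in Set.Ioi (0:ℝ), ENNReal.ofReal (y₂ ^ (1 - p) * y₂ ^ (-p)) *
          ENNReal.ofReal (|u - 1| ^ (1 - p) * (u + 1) ^ (-p)) := by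
    refine setLIntegral_congr_fun measurableSet_Ioi (fun u hu => ?_)
    have hu : 0 < u := hu
    rw [hh]
    simp only []
    rw [← ENNReal.ofReal_mul (by positivity)]
    congr 1
    have e1 : |y₂ * u - y₂| = y₂ * |u - 1| := by
      rw [show y₂ * u - y₂ = y₂ * (u - 1) from by ring, abs_mul, abs_of_pos hy]
    have e2 : y₂ * u + y₂ = y₂ * (u + 1) := by ring
    rw [e1, e2, Real.mul_rpow hy.le (abs_nonneg _), Real.mul_rpow hy.le (by linarith)]
    ring
  rw [step2, lintegral_const_mul' _ _ ENNReal.ofReal_ne_top, ← mul_assoc,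
    ← ENNReal.ofReal_mul hy.le]
  congr 2
  calc y₂ * (y₂ ^ (1 - p) * y₂ ^ (-p)) = y₂ ^ (1:ℝ) * y₂ ^ ((1 - p) + (-p)) := by
        rw [Real.rpow_add hy, Real.rpow_one]
    _ = y₂ ^ ((1:ℝ) + ((1 - p) + (-p))) := (Real.rpow_add hy _ _).symm
    _ = y₂ ^ (2 - 2 * p) := by congr 1; ring

lemma pointwise_bound {p : ℝ} (hp1 : 1 < p) {y₁ y₂ : ℝ} (hy : 0 < y₂)
    {x : ℝ × ℝ} (hx : 0 < x.2) :
    ENNReal.ofReal (y₂ ^ ((1:ℝ) - (2 / p - 1)) /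
        (Real.sqrt ((x.1 - y₁) ^ 2 + (x.2 - y₂) ^ 2)
          * Real.sqrt ((x.1 - y₁) ^ 2 + (x.2 + y₂) ^ 2))) ^ p
      ≤ ENNReal.ofReal (y₂ ^ (2 * p - 2)) *
        (ENNReal.ofReal (((x.1 - y₁) ^ 2 + (x.2 - y₂) ^ 2) ^ (-(p / 2))) *
          ENNReal.ofReal ((x.2 + y₂) ^ (-p))) := by
  have hp0 : (0:ℝ) < p := by linarith
  set N : ℝ := y₂ ^ ((1:ℝ) - (2 / p - 1)) with hN
  set s₁ : ℝ := (x.1 - y₁) ^ 2 + (x.2 - y₂) ^ 2 with hs₁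
  set b : ℝ := x.2 + y₂ with hb
  have hbpos : 0 < b := by positivity
  have hNpos : 0 < N := Real.rpow_pos_of_pos hy _
  have hs₁nonneg : 0 ≤ s₁ := by positivity
  have hd₂ : b ≤ Real.sqrt ((x.1 - y₁) ^ 2 + b ^ 2) := by
    rw [show b = Real.sqrt (b ^ 2) from (Real.sqrt_sq hbpos.le).symm]
    exact Real.sqrt_le_sqrt (by nlinarith [sq_nonneg (x.1 - y₁), Real.sq_sqrt (sq_nonneg b)])
  rw [ENNReal.ofReal_rpow_of_nonneg (by positivity) hp0.le,
    ← ENNReal.ofReal_mul (by positivity), ← ENNReal.ofReal_mul (Real.rpow_nonneg hy.le _)]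
  refine ENNReal.ofReal_le_ofReal ?_
  rcases eq_or_lt_of_le hs₁nonneg with hs | hs
  · rw [← hs, Real.sqrt_zero, zero_mul, div_zero, Real.zero_rpow hp0.ne',
      Real.zero_rpow (show -(p/2) ≠ 0 by intro h; rw [neg_eq_zero] at h; linarith)]
    positivity
  · have hd₁pos : 0 < Real.sqrt s₁ := Real.sqrt_pos.2 hs
    have step1 : N / (Real.sqrt s₁ * Real.sqrt ((x.1 - y₁) ^ 2 + b ^ 2))
        ≤ N / (Real.sqrt s₁ * b) := by
      gcongr
    have step2 : (N / (Real.sqrt s₁ * Real.sqrt ((x.1 - y₁) ^ 2 + b ^ 2))) ^ p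
        ≤ (N / (Real.sqrt s₁ * b)) ^ p :=
      Real.rpow_le_rpow (by positivity) step1 hp0.le
    refine step2.trans (le_of_eq ?_)
    rw [Real.div_rpow hNpos.le (by positivity), Real.mul_rpow (Real.sqrt_nonneg _) hbpos.le]
    have e1 : N ^ p = y₂ ^ (2 * p - 2) := by
      rw [hN, ← Real.rpow_mul hy.le]
      congr 1
      field_simp
      ring
    have e2 : Real.sqrt s₁ ^ p = s₁ ^ (p / 2) := by
      rw [Real.sqrt_eq_rpow, ← Real.rpow_mul hs₁nonneg]
      congr 1
      ring
    rw [e1, e2, Real.rpow_neg hs₁nonneg, Real.rpow_neg hbpos.le, div_eq_mul_inv, mul_inv]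

noncomputable def Bint (p : ℝ) : ℝ≥0∞ := ∫⁻ t : ℝ, ENNReal.ofReal ((t ^ 2 + 1) ^ (-(p / 2)))
noncomputable def Aint (p : ℝ) : ℝ≥0∞ :=
  ∫⁻ u in Set.Ioi (0:ℝ), ENNReal.ofReal (|u - 1| ^ (1 - p) * (u + 1) ^ (-p))

lemma key {p : ℝ} (hp1 : 1 < p) (hp2 : p < 2) {y₁ y₂ : ℝ} (hy : 0 < y₂) :
    ∫⁻ x : ℝ × ℝ in halfPlane,
        ENNReal.ofReal (y₂ ^ ((1:ℝ) - (2 / p - 1)) /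
          (Real.sqrt ((x.1 - y₁) ^ 2 + (x.2 - y₂) ^ 2)
            * Real.sqrt ((x.1 - y₁) ^ 2 + (x.2 + y₂) ^ 2))) ^ p
      ≤ Bint p * Aint p := by
  have hp0 : (0:ℝ) < p := by linarith
  set H : ℝ × ℝ → ℝ≥0∞ := fun x =>
    ENNReal.ofReal (((x.1 - y₁) ^ 2 + (x.2 - y₂) ^ 2) ^ (-(p / 2))) *
      ENNReal.ofReal ((x.2 + y₂) ^ (-p)) with hH
  have hHmeas : Measurable H := by fun_prop
  have step1 : ∫⁻ x : ℝ × ℝ in halfPlane,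
      ENNReal.ofReal (y₂ ^ ((1:ℝ) - (2 / p - 1)) /
        (Real.sqrt ((x.1 - y₁) ^ 2 + (x.2 - y₂) ^ 2)
          * Real.sqrt ((x.1 - y₁) ^ 2 + (x.2 + y₂) ^ 2))) ^ p
      ≤ ∫⁻ x : ℝ × ℝ in halfPlane, ENNReal.ofReal (y₂ ^ (2 * p - 2)) * H x := by
    refine setLIntegral_mono' (by
      have : halfPlane = (Set.univ : Set ℝ) ×ˢ Set.Ioi (0:ℝ) := by
        ext z; simp [halfPlane, Set.mem_prod]
      rw [this]; exact MeasurableSet.prod MeasurableSet.univ measurableSet_Ioi) ?_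
    intro x hx
    have hx2 : 0 < x.2 := hx
    simpa [hH, mul_assoc] using pointwise_bound hp1 hy hx2
  refine step1.trans ?_
  rw [lintegral_const_mul' _ _ ENNReal.ofReal_ne_top]
  have hrestrict : volume.restrict halfPlane
      = (volume : Measure ℝ).prod ((volume : Measure ℝ).restrict (Set.Ioi 0)) := by
    have hset : halfPlane = (Set.univ : Set ℝ) ×ˢ Set.Ioi (0:ℝ) := by
      ext z; simp [halfPlane, Set.mem_prod]
    rw [hset, MeasureTheory.Measure.volume_eq_prod, ← Measure.prod_restrict,
      Measure.restrict_univ]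
  rw [hrestrict, lintegral_prod_symm H hHmeas.aemeasurable]
  -- inner integral computation, a.e. in x₂
  have hBne : Bint p ≠ ⊤ := (B_fin hp1).ne
  have hae : ∀ᵐ x₂ ∂(volume.restrict (Set.Ioi (0:ℝ))), x₂ ≠ y₂ := by
    have h0 : (volume.restrict (Set.Ioi (0:ℝ))) {y₂} = 0 := by
      rw [Measure.restrict_apply (measurableSet_singleton _)]
      exact measure_mono_null Set.inter_subset_left (measure_singleton _)
    rw [ae_iff]
    convert h0 using 2
    ext a
    simp
  have inner_eq : ∀ᵐ x₂ ∂(volume.restrict (Set.Ioi (0:ℝ))),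
      (∫⁻ x₁ : ℝ, H (x₁, x₂))
        = ENNReal.ofReal (|x₂ - y₂| ^ (1 - p) * (x₂ + y₂) ^ (-p)) * Bint p := by
    filter_upwards [hae] with x₂ hne
    have e0 : ∫⁻ x₁ : ℝ, H (x₁, x₂)
        = (∫⁻ x₁ : ℝ, ENNReal.ofReal (((x₁ - y₁) ^ 2 + (x₂ - y₂) ^ 2) ^ (-(p / 2)))) *
          ENNReal.ofReal ((x₂ + y₂) ^ (-p)) := by
      simp only [hH]
      exact lintegral_mul_const' _ _ ENNReal.ofReal_ne_top
    rw [e0]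
    have habs : ∀ x₁ : ℝ, (x₁ - y₁) ^ 2 + (x₂ - y₂) ^ 2
        = (x₁ - y₁) ^ 2 + |x₂ - y₂| ^ 2 := fun x₁ => by rw [sq_abs]
    simp_rw [habs]
    rw [inner_subst y₁ |x₂ - y₂| (abs_pos.2 (sub_ne_zero.2 hne))]
    rw [ENNReal.ofReal_mul (Real.rpow_nonneg (abs_nonneg _) _)]
    show ENNReal.ofReal (|x₂ - y₂| ^ (1 - p)) * Bint p * ENNReal.ofReal ((x₂ + y₂) ^ (-p)) = _
    ring
  rw [lintegral_congr_ae inner_eq, lintegral_mul_const' _ _ hBne, outer_subst hy,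
    ← mul_assoc, ← mul_assoc, ← ENNReal.ofReal_mul (Real.rpow_nonneg hy.le _),
    ← Real.rpow_add hy, show (2 * p - 2) + (2 - 2 * p) = 0 from by ring, Real.rpow_zero,
    ENNReal.ofReal_one, one_mul]
  rw [mul_comm]
  exact le_of_eq (by rw [Aint])

/-- For `p ∈ (1,2)` and `θ_p = 2/p − 1`, the family of functions
`φ_y(x) = y₂^{1−θ_p}/(|x−y|·|x−y*|)` is uniformly bounded in `L^p(ℝ²₊)`,
independently of `y ∈ ℝ²₊`. -/
theorem phi_family_uniformly_Lp (p : ℝ) (hp1 : 1 < p) (hp2 : p < 2) :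
    ∃ C > 0, ∀ y₁ y₂ : ℝ, 0 < y₂ →
      eLpNorm (fun x : ℝ × ℝ =>
          y₂ ^ ((1 : ℝ) - (2 / p - 1)) /
            (Real.sqrt ((x.1 - y₁)^2 + (x.2 - y₂)^2)
              * Real.sqrt ((x.1 - y₁)^2 + (x.2 + y₂)^2)))
        (ENNReal.ofReal p) (volume.restrict halfPlane) ≤ ENNReal.ofReal C := by
  have hp0 : (0:ℝ) < p := by linarith
  set M : ℝ≥0∞ := (Bint p * Aint p) ^ (1 / p) with hM
  have hMne : M ≠ ⊤ :=
    ENNReal.rpow_ne_top_of_nonneg (by positivity)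
      (ENNReal.mul_ne_top (B_fin hp1).ne (A_fin hp1 hp2).ne)
  refine ⟨M.toReal + 1, by positivity, fun y₁ y₂ hy => ?_⟩
  rw [eLpNorm_eq_lintegral_rpow_enorm_toReal
    (by simpa [ENNReal.ofReal_eq_zero] using hp0) ENNReal.ofReal_ne_top,
    ENNReal.toReal_ofReal hp0.le]
  have hnn : ∀ x : ℝ × ℝ, (0:ℝ) ≤ y₂ ^ ((1 : ℝ) - (2 / p - 1)) /
      (Real.sqrt ((x.1 - y₁)^2 + (x.2 - y₂)^2)
        * Real.sqrt ((x.1 - y₁)^2 + (x.2 + y₂)^2)) := fun x =>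
    div_nonneg (Real.rpow_nonneg hy.le _) (mul_nonneg (Real.sqrt_nonneg _) (Real.sqrt_nonneg _))
  calc (∫⁻ x : ℝ × ℝ, (‖y₂ ^ ((1 : ℝ) - (2 / p - 1)) /
            (Real.sqrt ((x.1 - y₁)^2 + (x.2 - y₂)^2)
              * Real.sqrt ((x.1 - y₁)^2 + (x.2 + y₂)^2))‖ₑ : ℝ≥0∞) ^ p
          ∂(volume.restrict halfPlane)) ^ (1 / p)
      = (∫⁻ x : ℝ × ℝ in halfPlane, ENNReal.ofReal (y₂ ^ ((1 : ℝ) - (2 / p - 1)) /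
            (Real.sqrt ((x.1 - y₁)^2 + (x.2 - y₂)^2)
              * Real.sqrt ((x.1 - y₁)^2 + (x.2 + y₂)^2))) ^ p) ^ (1 / p) := by
        congr 1
        refine lintegral_congr fun x => ?_
        rw [Real.enorm_eq_ofReal (hnn x)]
    _ ≤ (Bint p * Aint p) ^ (1 / p) := ENNReal.rpow_le_rpow (key hp1 hp2 hy) (by positivity)
    _ = ENNReal.ofReal M.toReal := (ENNReal.ofReal_toReal hMne).symm
    _ ≤ ENNReal.ofReal (M.toReal + 1) := ENNReal.ofReal_le_ofReal (by linarith)
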